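/- Fix q > 1, λ ∈ (0,1), f ∈ R^d with f_j > 0 for all j, and let g(l) = ||l - f||_q - λ||l||_q. Suppose p is a local minimizer of g with p_j ∉ {0, f_j} for all j, and define c = λ^{1/(q-1)}·||p - f||_q/||p||_q. Then for each j: if p_j > f_j then (p_j - f_j)/p_j = c, and if p_j < 0 then (f_j - p_j)/(-p_j) = c. Consequently p cannot simultaneously have a coordinate in (f_j, ∞) and a coordinate in (-∞, 0). -/

import Mathlib

open Real Filter

lemma sum_update_abs' {d : ℕ} (p f : Fin d → ℝ) (j : Fin d) (t q : ℝ) :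
    ∑ k, |Function.update p j t k - f k| ^ q
      = |t - f j| ^ q + ∑ k ∈ Finset.univ.erase j, |p k - f k| ^ q := by
  rw [← Finset.add_sum_erase _ _ (Finset.mem_univ j)]
  simp only [Function.update_self]
  congr 1
  refine Finset.sum_congr rfl fun k hk => ?_
  rw [Function.update_of_ne (Finset.ne_of_mem_erase hk)]

/-- First-order conditions at a local minimizer p of g with p_j ∉ {0, f_j}:
(p_j - f_j)/p_j = c when p_j > f_j, (f_j - p_j)/(-p_j) = c when p_j < 0, where
c = λ^{1/(q-1)}‖p-f‖_q/‖p‖_q; consequently p cannot simultaneously have a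
coordinate above f_j and a negative coordinate. -/
theorem stmt18 (d : ℕ) (q lam : ℝ) (hq : 1 < q) (hlam : lam ∈ Set.Ioo (0:ℝ) 1)
    (f : Fin d → ℝ) (hf : ∀ j, 0 < f j)
    (p : Fin d → ℝ) (hp : ∀ j, p j ≠ 0 ∧ p j ≠ f j)
    (hmin : IsLocalMin (fun l : Fin d → ℝ =>
      (∑ j, |l j - f j| ^ q) ^ (1/q) - lam * (∑ j, |l j| ^ q) ^ (1/q)) p)
    (c : ℝ)
    (hc : c = lam ^ (1/(q-1)) *
      (∑ j, |p j - f j| ^ q) ^ (1/q) / (∑ j, |p j| ^ q) ^ (1/q)) :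
    (∀ j, (f j < p j → (p j - f j) / p j = c) ∧
          (p j < 0 → (f j - p j) / (-(p j)) = c)) ∧
    ¬ (∃ j k, f j < p j ∧ p k < 0) := by
  obtain ⟨hlam0, hlam1⟩ := hlam
  have hq0 : (0:ℝ) < q := lt_trans one_pos hq
  have hqne : q ≠ 0 := ne_of_gt hq0
  have hqm1 : (0:ℝ) < q - 1 := by linarith
  have key : ∀ j, 0 < p j * (p j - f j) → (p j - f j) / p j = c := by
    intro j hsign
    have hxne : p j - f j ≠ 0 := sub_ne_zero.mpr (hp j).2
    have hyne : p j ≠ 0 := (hp j).1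
    set A := ∑ k, |p k - f k| ^ q with hA
    set B := ∑ k, |p k| ^ q with hB
    have hApos : 0 < A := by
      rw [hA]
      exact Finset.sum_pos' (fun k _ => Real.rpow_nonneg (abs_nonneg _) q)
        ⟨j, Finset.mem_univ j, Real.rpow_pos_of_pos (abs_pos.mpr hxne) q⟩
    have hBpos : 0 < B := by
      rw [hB]
      exact Finset.sum_pos' (fun k _ => Real.rpow_nonneg (abs_nonneg _) q)
        ⟨j, Finset.mem_univ j, Real.rpow_pos_of_pos (abs_pos.mpr hyne) q⟩
    set S₁ := ∑ k ∈ Finset.univ.erase j, |p k - f k| ^ q with hS₁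
    set S₂ := ∑ k ∈ Finset.univ.erase j, |p k| ^ q with hS₂
    have hAS : A = |p j - f j| ^ q + S₁ := by
      rw [hA, hS₁, ← Finset.add_sum_erase _ _ (Finset.mem_univ j)]
    have hBS : B = |p j| ^ q + S₂ := by
      rw [hB, hS₂, ← Finset.add_sum_erase _ _ (Finset.mem_univ j)]
    set φ : ℝ → ℝ :=
      fun t => (|t - f j| ^ q + S₁) ^ (1/q) - lam * ((|t| ^ q + S₂) ^ (1/q)) with hφ
    have hcont : Continuous (fun t : ℝ => Function.update p j t) := by
      apply continuous_pi
      intro i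
      rcases eq_or_ne i j with rfl | hij
      · simpa using continuous_id'
      · simp only [Function.update_of_ne hij]
        exact continuous_const
    have htend : Filter.Tendsto (fun t : ℝ => Function.update p j t) (nhds (p j)) (nhds p) := by
      have h := hcont.tendsto (p j)
      rwa [Function.update_eq_self] at h
    have hφcomp : ∀ t : ℝ, φ t = (∑ k, |Function.update p j t k - f k| ^ q) ^ (1/q)
        - lam * (∑ k, |Function.update p j t k| ^ q) ^ (1/q) := by
      intro t
      have h2 : ∑ k, |Function.update p j t k| ^ q = |t| ^ q + S₂ := by
        have h3 := sum_update_abs' p (fun _ => 0) j t q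
        simp only [sub_zero] at h3
        exact h3
      rw [sum_update_abs' p f j t q, h2]
    have hφmin : IsLocalMin φ (p j) := by
      have hev := htend.eventually hmin
      refine hev.mono fun t ht => ?_
      have hval : φ (p j) = A ^ (1/q) - lam * B ^ (1/q) := by
        have := hφcomp (p j)
        rwa [Function.update_eq_self] at this
      rw [hφcomp t, hval]
      exact ht
    have hd1 : HasDerivAt (fun t : ℝ => |t - f j| ^ q)
        (q * |p j - f j| ^ (q - 2) * (p j - f j)) (p j) := by
      have h := (hasDerivAt_abs_rpow (p j - f j) hq).comp (p j)
        ((hasDerivAt_id (p j)).sub_const (f j))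
      simpa [Function.comp_def] using h
    have hA1 : |p j - f j| ^ q + S₁ ≠ 0 := by rw [← hAS]; exact hApos.ne'
    have hB1 : |p j| ^ q + S₂ ≠ 0 := by rw [← hBS]; exact hBpos.ne'
    have hd2 : HasDerivAt (fun t : ℝ => (|t - f j| ^ q + S₁) ^ (1/q))
        ((q * |p j - f j| ^ (q - 2) * (p j - f j)) * (1/q) *
          (|p j - f j| ^ q + S₁) ^ (1/q - 1)) (p j) :=
      (hd1.add_const S₁).rpow_const (Or.inl hA1)
    have hd3 : HasDerivAt (fun t : ℝ => |t| ^ q) (q * |p j| ^ (q - 2) * p j) (p j) :=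
      hasDerivAt_abs_rpow (p j) hq
    have hd4 : HasDerivAt (fun t : ℝ => lam * ((|t| ^ q + S₂) ^ (1/q)))
        (lam * ((q * |p j| ^ (q - 2) * p j) * (1/q) * (|p j| ^ q + S₂) ^ (1/q - 1))) (p j) :=
      HasDerivAt.const_mul lam ((hd3.add_const S₂).rpow_const (Or.inl hB1))
    have hD : HasDerivAt φ
        ((q * |p j - f j| ^ (q - 2) * (p j - f j)) * (1/q) *
          (|p j - f j| ^ q + S₁) ^ (1/q - 1)
        - lam * ((q * |p j| ^ (q - 2) * p j) * (1/q) * (|p j| ^ q + S₂) ^ (1/q - 1))) (p j) :=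
      hd2.sub hd4
    have hD0 : (q * |p j - f j| ^ (q - 2) * (p j - f j)) * (1/q) *
          (|p j - f j| ^ q + S₁) ^ (1/q - 1)
        - lam * ((q * |p j| ^ (q - 2) * p j) * (1/q) * (|p j| ^ q + S₂) ^ (1/q - 1)) = 0 := by
      rw [← hD.deriv]; exact hφmin.deriv_eq_zero
    rw [← hAS, ← hBS] at hD0
    have heq : |p j - f j| ^ (q - 2) * (p j - f j) * A ^ (1/q - 1)
        = lam * (|p j| ^ (q - 2) * p j * B ^ (1/q - 1)) := by
      have hexp : (1:ℝ)/q - 1 = (1-q)/q := by field_simp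
      rw [hexp]
      field_simp at hD0
      apply mul_left_cancel₀ hqne
      linear_combination q * hD0
    have hmain : A ^ (1/q - 1) * |p j - f j| ^ (q - 1)
          = lam * (B ^ (1/q - 1) * |p j| ^ (q - 1))
        ∧ (p j - f j) / p j = |p j - f j| / |p j| := by
      rcases mul_pos_iff.mp hsign with ⟨hy, hx⟩ | ⟨hy, hx⟩
      · rw [abs_of_pos hx, abs_of_pos hy] at heq ⊢
        constructor
        · rw [show q - 1 = (q - 2) + 1 by ring, Real.rpow_add_one hx.ne',
            Real.rpow_add_one hy.ne']
          linear_combination heq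
        · rfl
      · rw [abs_of_neg hx, abs_of_neg hy] at heq ⊢
        constructor
        · rw [show q - 1 = (q - 2) + 1 by ring,
            Real.rpow_add_one (by linarith : -(p j - f j) ≠ 0),
            Real.rpow_add_one (by linarith : -(p j) ≠ 0)]
          linear_combination (-1 : ℝ) * heq
        · rw [neg_div_neg_eq]
    have hane : 0 < |p j - f j| := abs_pos.mpr hxne
    have hbne : 0 < |p j| := abs_pos.mpr hyne
    have hr1 : 0 < |p j - f j| / |p j| := div_pos hane hbne
    have e1 : A ^ (1/q - 1) * A ^ ((1/q) * (q - 1)) = 1 := by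
      rw [← Real.rpow_add hApos, show (1/q - 1) + (1/q) * (q - 1) = 0 by field_simp; ring,
        Real.rpow_zero]
    have e2 : B ^ (1/q - 1) * B ^ ((1/q) * (q - 1)) = 1 := by
      rw [← Real.rpow_add hBpos, show (1/q - 1) + (1/q) * (q - 1) = 0 by field_simp; ring,
        Real.rpow_zero]
    have hstep : (|p j - f j| / |p j|) ^ (q - 1) = c ^ (q - 1) := by
      rw [Real.div_rpow (abs_nonneg _) (abs_nonneg _), hc,
        Real.div_rpow (by positivity) (Real.rpow_nonneg hBpos.le _),
        Real.mul_rpow (Real.rpow_nonneg hlam0.le _) (Real.rpow_nonneg hApos.le _),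
        ← Real.rpow_mul hlam0.le, one_div (q - 1), inv_mul_cancel₀ hqm1.ne', Real.rpow_one,
        ← Real.rpow_mul hApos.le, ← Real.rpow_mul hBpos.le]
      rw [div_eq_div_iff (Real.rpow_pos_of_pos hbne _).ne' (Real.rpow_pos_of_pos hBpos _).ne']
      linear_combination A ^ ((1/q) * (q - 1)) * B ^ ((1/q) * (q - 1)) * hmain.1
        - |p j - f j| ^ (q - 1) * B ^ ((1/q) * (q - 1)) * e1
        + lam * |p j| ^ (q - 1) * A ^ ((1/q) * (q - 1)) * e2
    have hc0 : 0 ≤ c := by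
      rw [hc]
      apply div_nonneg _ (Real.rpow_nonneg hBpos.le _)
      exact mul_nonneg (Real.rpow_nonneg hlam0.le _) (Real.rpow_nonneg hApos.le _)
    have hfin : |p j - f j| / |p j| = c := by
      have h1 : ((|p j - f j| / |p j|) ^ (q - 1)) ^ (1/(q - 1))
          = (c ^ (q - 1)) ^ (1/(q - 1)) := by rw [hstep]
      rwa [← Real.rpow_mul hr1.le, ← Real.rpow_mul hc0, mul_one_div,
        div_self hqm1.ne', Real.rpow_one, Real.rpow_one] at h1
    rw [hmain.2, hfin]
  refine ⟨fun j => ⟨?_, ?_⟩, ?_⟩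
  · intro h
    exact key j (mul_pos (lt_trans (hf j) h) (sub_pos.mpr h))
  · intro h
    have h2 := key j (mul_pos_of_neg_of_neg h (by linarith [hf j]))
    rw [show f j - p j = -(p j - f j) by ring, show -(p j) = -(p j) from rfl, neg_div_neg_eq]
    exact h2
  · rintro ⟨j, k, hj, hk⟩
    have h1 := key j (mul_pos (lt_trans (hf j) hj) (sub_pos.mpr hj))
    have h2 := key k (mul_pos_of_neg_of_neg hk (by linarith [hf k]))
    have hcl : c < 1 := by
      rw [← h1, div_lt_one (lt_trans (hf j) hj)]
      linarith [hf j]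
    have hcg : 1 < c := by
      rw [← h2, lt_div_iff_of_neg hk]
      linarith [hf k]
    linarith
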